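/- For any ω-narrow subset A of a topological group X, the subgroup of X generated by A is ω-narrow. -/

import Mathlib

/-- Left ω-narrow subset of a topological group. -/
def LeftOmegaNarrow {X : Type*} [Group X] [TopologicalSpace X] (A : Set X) : Prop :=
  ∀ U ∈ nhds (1 : X), ∃ C : Set X, C.Countable ∧ A ⊆ ⋃ c ∈ C, (fun u => c * u) '' U

/-- Right ω-narrow subset of a topological group. -/
def RightOmegaNarrow {X : Type*} [Group X] [TopologicalSpace X] (A : Set X) : Prop :=
  ∀ U ∈ nhds (1 : X), ∃ C : Set X, C.Countable ∧ A ⊆ ⋃ c ∈ C, (fun u => u * c) '' U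

/-- ω-narrow subset: both left and right ω-narrow. -/
def OmegaNarrow {X : Type*} [Group X] [TopologicalSpace X] (A : Set X) : Prop :=
  LeftOmegaNarrow A ∧ RightOmegaNarrow A

open Pointwise

section Aux

variable {X : Type*} [Group X] [TopologicalSpace X]

lemma leftOmegaNarrow_mono {A B : Set X} (h : LeftOmegaNarrow B) (hAB : A ⊆ B) :
    LeftOmegaNarrow A := fun U hU => by
  obtain ⟨C, hC, hsub⟩ := h U hU
  exact ⟨C, hC, hAB.trans hsub⟩

lemma leftOmegaNarrow_iUnion {A : ℕ → Set X} (h : ∀ n, LeftOmegaNarrow (A n)) :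
    LeftOmegaNarrow (⋃ n, A n) := fun U hU => by
  choose C hCc hCs using fun n => h n U hU
  refine ⟨⋃ n, C n, Set.countable_iUnion hCc, Set.iUnion_subset fun n x hx => ?_⟩
  have := hCs n hx
  simp only [Set.mem_iUnion, exists_prop] at this ⊢
  obtain ⟨c, hc, hcx⟩ := this
  exact ⟨c, ⟨n, hc⟩, hcx⟩

lemma leftOmegaNarrow_of_countable {A : Set X} (h : A.Countable) : LeftOmegaNarrow A :=
  fun U hU => ⟨A, h, fun x hx => by
    simp only [Set.mem_iUnion, exists_prop]
    exact ⟨x, hx, 1, mem_of_mem_nhds hU, mul_one x⟩⟩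

lemma leftOmegaNarrow_union {A B : Set X} (hA : LeftOmegaNarrow A) (hB : LeftOmegaNarrow B) :
    LeftOmegaNarrow (A ∪ B) := fun U hU => by
  obtain ⟨C, hCc, hCs⟩ := hA U hU
  obtain ⟨D, hDc, hDs⟩ := hB U hU
  refine ⟨C ∪ D, hCc.union hDc, Set.union_subset ?_ ?_⟩ <;>
    [skip; skip] <;> intro x hx <;>
    simp only [Set.mem_iUnion, exists_prop, Set.mem_union]
  · obtain ⟨c, hc, hcx⟩ := by simpa only [Set.mem_iUnion, exists_prop] using hCs hx
    exact ⟨c, Or.inl hc, hcx⟩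
  · obtain ⟨c, hc, hcx⟩ := by simpa only [Set.mem_iUnion, exists_prop] using hDs hx
    exact ⟨c, Or.inr hc, hcx⟩

lemma leftOmegaNarrow_inv_of_right [IsTopologicalGroup X] {A : Set X}
    (h : RightOmegaNarrow A) : LeftOmegaNarrow A⁻¹ := fun U hU => by
  obtain ⟨C, hCc, hCs⟩ := h U⁻¹ (inv_mem_nhds_one X hU)
  refine ⟨Inv.inv '' C, (hCc.image Inv.inv), fun x hx => ?_⟩
  have hxA : x⁻¹ ∈ A := hx
  have := hCs hxA
  simp only [Set.mem_iUnion, exists_prop] at this ⊢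
  obtain ⟨c, hc, u, hu, huc⟩ := this
  refine ⟨c⁻¹, ⟨c, hc, rfl⟩, u⁻¹, ?_, ?_⟩
  · simpa using hu
  · have huc' : u * c = x⁻¹ := huc
    have : (u * c)⁻¹ = x := by rw [huc']; simp
    simpa [mul_inv_rev] using this

lemma leftOmegaNarrow_mul [IsTopologicalGroup X] {A B : Set X}
    (hA : LeftOmegaNarrow A) (hB : LeftOmegaNarrow B) : LeftOmegaNarrow (A * B) := by
  intro U hU
  obtain ⟨V, hV, hVU⟩ := exists_nhds_one_split hU
  -- B ⊆ ⋃ e ∈ E, e * V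
  obtain ⟨E, hEc, hEs⟩ := hB V hV
  -- for each e, conjugated neighborhood W e = {x | e⁻¹ * x * e ∈ V}
  have hW : ∀ e : X, (fun x => e⁻¹ * x * e) ⁻¹' V ∈ nhds (1 : X) := by
    intro e
    have hcont : Continuous fun x : X => e⁻¹ * x * e := by continuity
    exact hcont.continuousAt.preimage_mem_nhds (by simpa using hV)
  choose D hDc hDs using fun e => hA _ (hW e)
  refine ⟨⋃ e ∈ E, (fun d => d * e) '' D e,
    hEc.biUnion fun e _ => ((hDc e).image _), ?_⟩
  rintro x hx
  obtain ⟨a, ha, b, hb, rfl⟩ := hx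
  -- b = e * v with e ∈ E, v ∈ V
  have := hEs hb
  simp only [Set.mem_iUnion, exists_prop] at this
  obtain ⟨e, heE, v, hvV, hev⟩ := this
  -- a = d * w with d ∈ D e, w ∈ W e
  have := hDs e ha
  simp only [Set.mem_iUnion, exists_prop] at this
  obtain ⟨d, hdD, w, hwW, hdw⟩ := this
  simp only [Set.mem_iUnion, Set.mem_image, exists_prop]
  refine ⟨d * e, ⟨e, heE, d, hdD, rfl⟩, (e⁻¹ * w * e) * v, hVU _ hwW _ hvV, ?_⟩
  rw [← hdw, ← hev]
  group

end Aux

section Symmetry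

variable {X : Type*} [Group X] [TopologicalSpace X] [IsTopologicalGroup X]

lemma rightOmegaNarrow_of_left_inv {A : Set X} (h : LeftOmegaNarrow A⁻¹) :
    RightOmegaNarrow A := fun U hU => by
  obtain ⟨C, hCc, hCs⟩ := h U⁻¹ (inv_mem_nhds_one X hU)
  refine ⟨Inv.inv '' C, (hCc.image Inv.inv), fun x hx => ?_⟩
  have := hCs (Set.inv_mem_inv.2 hx)
  simp only [Set.mem_iUnion, exists_prop] at this ⊢
  obtain ⟨c, hc, u, hu, huc⟩ := this
  refine ⟨c⁻¹, ⟨c, hc, rfl⟩, u⁻¹, by simpa using hu, ?_⟩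
  have huc' : c * u = x⁻¹ := huc
  have : (c * u)⁻¹ = x := by rw [huc']; simp
  simpa [mul_inv_rev] using this

end Symmetry

theorem omegaNarrow_closure_subgroup {X : Type*} [Group X] [TopologicalSpace X]
    [IsTopologicalGroup X] (A : Set X) (hA : OmegaNarrow A) :
    OmegaNarrow ((Subgroup.closure A : Subgroup X) : Set X) := by
  obtain ⟨hAl, hAr⟩ := hA
  set S : Set X := {1} ∪ (A ∪ A⁻¹) with hS
  have hSsymm : S⁻¹ = S := by
    ext x
    simp only [hS, Set.mem_inv, Set.mem_union, Set.mem_singleton_iff, inv_eq_one]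
    constructor <;> rintro (h | h | h) <;> simp_all [Set.mem_inv]
  have hSleft : LeftOmegaNarrow S :=
    leftOmegaNarrow_union (leftOmegaNarrow_of_countable (Set.countable_singleton 1))
      (leftOmegaNarrow_union hAl (leftOmegaNarrow_inv_of_right hAr))
  have hpow : ∀ n : ℕ, LeftOmegaNarrow (S ^ n) := by
    intro n
    induction n with
    | zero => simpa [Set.singleton_one] using leftOmegaNarrow_of_countable (Set.countable_singleton (1 : X))
    | succ n ih => rw [pow_succ]; exact leftOmegaNarrow_mul ih hSleft
  have hsub : ((Subgroup.closure A : Subgroup X) : Set X) ⊆ ⋃ n : ℕ, S ^ n := by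
    intro x hx
    induction hx using Subgroup.closure_induction with
    | mem a ha =>
      exact Set.mem_iUnion.2 ⟨1, by simpa [hS] using Or.inr (Or.inl ha)⟩
    | one => exact Set.mem_iUnion.2 ⟨0, by simp⟩
    | mul a b _ _ ha hb =>
      obtain ⟨n, hn⟩ := Set.mem_iUnion.1 ha
      obtain ⟨m, hm⟩ := Set.mem_iUnion.1 hb
      exact Set.mem_iUnion.2 ⟨n + m, by rw [pow_add]; exact Set.mul_mem_mul hn hm⟩
    | inv a _ ha =>
      obtain ⟨n, hn⟩ := Set.mem_iUnion.1 ha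
      refine Set.mem_iUnion.2 ⟨n, ?_⟩
      have : a⁻¹ ∈ (S ^ n)⁻¹ := Set.inv_mem_inv.2 hn
      rwa [← inv_pow, hSsymm] at this
  have hleft : LeftOmegaNarrow ((Subgroup.closure A : Subgroup X) : Set X) :=
    leftOmegaNarrow_mono (leftOmegaNarrow_iUnion hpow) hsub
  refine ⟨hleft, rightOmegaNarrow_of_left_inv ?_⟩
  have hinv : ((Subgroup.closure A : Subgroup X) : Set X)⁻¹ =
      ((Subgroup.closure A : Subgroup X) : Set X) := by
    ext x
    simp [Set.mem_inv, inv_mem_iff]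
  rwa [hinv]
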